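/- Let G be a simple graph and let P be the set of pairs of distinct vertices {x, y} ⊆ V(G) such that N(x) ∩ N(y) ≠ ∅, i.e., x and y have a common neighbour. If M is a maximal matching in G, then |P| ≥ |E(G)| − |M|. -/

import Mathlib

theorem pairs_with_common_neighbour_count {V : Type*} [Fintype V] (G : SimpleGraph V)
    (M : Set (Sym2 V)) (hM : M ⊆ G.edgeSet)
    (hdisj : ∀ e ∈ M, ∀ f ∈ M, e ≠ f → ∀ v, v ∈ e → v ∉ f)
    (hmax : ∀ e ∈ G.edgeSet, e ∉ M → ∃ f ∈ M, ∃ v, v ∈ e ∧ v ∈ f) :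
    ({p : Sym2 V | ∃ x y : V, x ≠ y ∧ p = s(x, y) ∧
        (G.neighborSet x ∩ G.neighborSet y).Nonempty}.ncard : ℤ) ≥
      (G.edgeSet.ncard : ℤ) - (M.ncard : ℤ) := by
  classical
  letI : LinearOrder (Sym2 V) :=
    LinearOrder.lift' (Fintype.equivFin (Sym2 V)) (Fintype.equivFin (Sym2 V)).injective
  letI : PartialOrder (Sym2 V) := LinearOrder.toPartialOrder
  set P : Set (Sym2 V) := {p : Sym2 V | ∃ x y : V, x ≠ y ∧ p = s(x, y) ∧
      (G.neighborSet x ∩ G.neighborSet y).Nonempty} with hP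
  -- For each edge not in M, choose a minimal matching edge meeting it.
  have h1 : ∀ e, e ∈ G.edgeSet \ M → ∃ f v, f ∈ M ∧ v ∈ e ∧ v ∈ f ∧
      ∀ f' ∈ M, (∃ u, u ∈ e ∧ u ∈ f') → f ≤ f' := by
    intro e he
    have hTne : (Finset.univ.filter (fun f : Sym2 V => f ∈ M ∧ ∃ v, v ∈ e ∧ v ∈ f)).Nonempty := by
      obtain ⟨f, hfM, v, hv1, hv2⟩ := hmax e he.1 he.2
      refine ⟨f, ?_⟩
      simp only [Finset.mem_filter, Finset.mem_univ, true_and]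
      exact ⟨hfM, v, hv1, hv2⟩
    have hmem := Finset.mem_filter.mp (Finset.min'_mem _ hTne)
    obtain ⟨-, hfM, v, hv1, hv2⟩ := hmem
    refine ⟨_, v, hfM, hv1, hv2, ?_⟩
    intro f' hf' hmeet
    exact Finset.min'_le _ f' (by
      simp only [Finset.mem_filter, Finset.mem_univ, true_and]
      exact ⟨hf', hmeet⟩)
  choose F vv hF hve hvf hmin using h1
  set φ : Sym2 V → Sym2 V := fun e =>
    if h : e ∈ G.edgeSet \ M then
      s(Sym2.Mem.other' (hve e h), Sym2.Mem.other' (hvf e h))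
    else e with hφ
  -- basic facts
  have espec : ∀ e (h : e ∈ G.edgeSet \ M), s(vv e h, Sym2.Mem.other' (hve e h)) = e :=
    fun e h => Sym2.other_spec' (hve e h)
  have fspec : ∀ e (h : e ∈ G.edgeSet \ M), s(vv e h, Sym2.Mem.other' (hvf e h)) = F e h :=
    fun e h => Sym2.other_spec' (hvf e h)
  have hadj_e : ∀ e (h : e ∈ G.edgeSet \ M), G.Adj (vv e h) (Sym2.Mem.other' (hve e h)) := by
    intro e h
    have := h.1
    rw [← espec e h] at this
    exact this
  have hadj_f : ∀ e (h : e ∈ G.edgeSet \ M), G.Adj (vv e h) (Sym2.Mem.other' (hvf e h)) := by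
    intro e h
    have := hM (hF e h)
    rw [← fspec e h] at this
    exact this
  have hne : ∀ e (h : e ∈ G.edgeSet \ M),
      Sym2.Mem.other' (hve e h) ≠ Sym2.Mem.other' (hvf e h) := by
    intro e h hcontra
    apply h.2
    have : e = F e h :=
      (espec e h).symm.trans (by rw [hcontra]; exact fspec e h)
    rw [this]
    exact hF e h
  -- φ maps into P
  have hmaps : ∀ e ∈ G.edgeSet \ M, φ e ∈ P := by
    intro e h
    rw [hφ]
    simp only [dif_pos h]
    refine ⟨Sym2.Mem.other' (hve e h), Sym2.Mem.other' (hvf e h), hne e h, rfl,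
      vv e h, ?_, ?_⟩
    · exact (hadj_e e h).symm
    · exact (hadj_f e h).symm
  -- φ is injective on edges not in M
  have hinj : Set.InjOn φ (G.edgeSet \ M) := by
    intro e1 h1 e2 h2 heq
    rw [hφ] at heq
    simp only [dif_pos h1, dif_pos h2] at heq
    set x1 := Sym2.Mem.other' (hve e1 h1) with hx1
    set y1 := Sym2.Mem.other' (hvf e1 h1) with hy1
    set x2 := Sym2.Mem.other' (hve e2 h2) with hx2
    set y2 := Sym2.Mem.other' (hvf e2 h2) with hy2
    set v1 := vv e1 h1 with hv1def
    set v2 := vv e2 h2 with hv2def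
    have he1 : e1 = s(v1, x1) := by rw [hv1def, hx1]; exact (espec e1 h1).symm
    have hfe1 : F e1 h1 = s(v1, y1) := by rw [hv1def, hy1]; exact (fspec e1 h1).symm
    have he2 : e2 = s(v2, x2) := by rw [hv2def, hx2]; exact (espec e2 h2).symm
    have hfe2 : F e2 h2 = s(v2, y2) := by rw [hv2def, hy2]; exact (fspec e2 h2).symm
    have hx1y1 : x1 ≠ y1 := hne e1 h1
    have hv1x1 : v1 ≠ x1 := (hadj_e e1 h1).ne
    have hv1y1 : v1 ≠ y1 := (hadj_f e1 h1).ne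
    have hv2x2 : v2 ≠ x2 := (hadj_e e2 h2).ne
    have hx1e1 : x1 ∈ e1 := by rw [he1]; exact Sym2.mem_mk_right _ _
    have hx2e2 : x2 ∈ e2 := by rw [he2]; exact Sym2.mem_mk_right _ _
    have hy1f1 : y1 ∈ F e1 h1 := by rw [hfe1]; exact Sym2.mem_mk_right _ _
    have hy2f2 : y2 ∈ F e2 h2 := by rw [hfe2]; exact Sym2.mem_mk_right _ _
    rw [Sym2.eq_iff] at heq
    rcases heq with ⟨hx, hy⟩ | ⟨hxy, hyx⟩
    · -- x1 = x2, y1 = y2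
      have hff : F e1 h1 = F e2 h2 := by
        by_contra hcon
        exact hdisj _ (hF e1 h1) _ (hF e2 h2) hcon y1 hy1f1 (hy ▸ hy2f2)
      have hvv : v1 = v2 := by
        have hs : s(v1, y1) = s(v2, y2) := by rw [← hfe1, ← hfe2, hff]
        rw [← hy, Sym2.eq_iff] at hs
        rcases hs with ⟨hv, -⟩ | ⟨hv, -⟩
        · exact hv
        · exact absurd hv hv1y1
      rw [he1, he2, hvv, hx]
    · -- x1 = y2, y1 = x2 : cross case
      have hle1 : F e1 h1 ≤ F e2 h2 :=
        hmin e1 h1 _ (hF e2 h2) ⟨x1, hx1e1, hxy ▸ hy2f2⟩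
      have hle2 : F e2 h2 ≤ F e1 h1 :=
        hmin e2 h2 _ (hF e1 h1) ⟨x2, hx2e2, hyx ▸ hy1f1⟩
      have hff : F e1 h1 = F e2 h2 := le_antisymm hle1 hle2
      have hs : s(v1, y1) = s(v2, x1) := by rw [← hfe1, hxy, ← hfe2, hff]
      rw [Sym2.eq_iff] at hs
      rcases hs with ⟨-, hv'⟩ | ⟨hv, -⟩
      · exact absurd hv'.symm hx1y1
      · exact absurd hv hv1x1
  have hle : (G.edgeSet \ M).ncard ≤ P.ncard :=
    Set.ncard_le_ncard_of_injOn φ hmaps hinj (Set.toFinite _)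
  have hdiff : (G.edgeSet \ M).ncard = G.edgeSet.ncard - M.ncard :=
    Set.ncard_diff hM (Set.toFinite _)
  have hMle : M.ncard ≤ G.edgeSet.ncard := Set.ncard_le_ncard hM (Set.toFinite _)
  rw [hdiff] at hle
  omega
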